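/- Let D = ⟨x, y | x^(2^r) = y² = [x,y]² = [x,[x,y]] = [y,[x,y]] = 1⟩ with r ≥ 2, let z := [x,y], and let c ∈ Z(D) have order 2^(r-1) with z ∉ ⟨c⟩. Then if k < r - 1 and a ∈ ⟨c⟩ has order 2^k, the quotient D/⟨a⟩ is isomorphic to the Rédei group ⟨x, y | x^(2^(r-k)) = y² = [x,y]² = [x,[x,y]] = [y,[x,y]] = 1⟩. -/

import Mathlib

open scoped commutatorElement


/-- The generator `x` of the free group on two letters. -/
def gx : FreeGroup (Fin 2) := FreeGroup.of 0

/-- The generator `y` of the free group on two letters. -/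
def gy : FreeGroup (Fin 2) := FreeGroup.of 1

/-- The relations of the Rédei presentation with parameters `r`, `s`:
`x^(2^r)`, `y^(2^s)`, `⁅x,y⁆^2`, `⁅x,⁅x,y⁆⁆`, `⁅y,⁅x,y⁆⁆`,
where `⁅a,b⁆ = a*b*a⁻¹*b⁻¹`. -/
def redeiRels (r s : ℕ) : Set (FreeGroup (Fin 2)) :=
  {gx ^ (2 ^ r), gy ^ (2 ^ s), ⁅gx, gy⁆ ^ 2, ⁅gx, ⁅gx, gy⁆⁆, ⁅gy, ⁅gx, gy⁆⁆}

/-- The Rédei group `⟨x,y ∣ x^(2^r) = y^(2^s) = [x,y]^2 = [x,[x,y]] = [y,[x,y]] = 1⟩`. -/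
abbrev RedeiGroup (r s : ℕ) := PresentedGroup (redeiRels r s)

/-- The image of the generator `x` in the Rédei group. -/
def Dx (r s : ℕ) : RedeiGroup r s := PresentedGroup.of 0

/-- The image of the generator `y` in the Rédei group. -/
def Dy (r s : ℕ) : RedeiGroup r s := PresentedGroup.of 1

/-- The element `z = [x,y]` of the Rédei group. -/
def Dz (r s : ℕ) : RedeiGroup r s := ⁅Dx r s, Dy r s⁆

set_option linter.unusedSectionVars false

namespace Stmt19

variable {r s : ℕ}

lemma mk_eq_one {w : FreeGroup (Fin 2)} (h : w ∈ redeiRels r s) :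
    PresentedGroup.mk (redeiRels r s) w = 1 :=
  (QuotientGroup.eq_one_iff w).2 (Subgroup.subset_normalClosure h)

lemma mk_gx : PresentedGroup.mk (redeiRels r s) gx = Dx r s := rfl
lemma mk_gy : PresentedGroup.mk (redeiRels r s) gy = Dy r s := rfl

lemma relX : (Dx r s) ^ (2 ^ r) = 1 := by
  have h := mk_eq_one (r := r) (s := s) (Set.mem_insert _ _)
  rwa [map_pow, mk_gx] at h

lemma relY : (Dy r s) ^ (2 ^ s) = 1 := by
  have h := mk_eq_one (r := r) (s := s)
    (Set.mem_insert_of_mem _ (Set.mem_insert _ _))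
  rwa [map_pow, mk_gy] at h

lemma relZ2 : (Dz r s) ^ 2 = 1 := by
  have h := mk_eq_one (r := r) (s := s)
    (Set.mem_insert_of_mem _ (Set.mem_insert_of_mem _ (Set.mem_insert _ _)))
  rwa [map_pow, map_commutatorElement, mk_gx, mk_gy] at h

lemma commXZ : Commute (Dx r s) (Dz r s) := by
  have h := mk_eq_one (r := r) (s := s)
    (Set.mem_insert_of_mem _ (Set.mem_insert_of_mem _ (Set.mem_insert_of_mem _
      (Set.mem_insert _ _))))
  rw [map_commutatorElement, map_commutatorElement, mk_gx, mk_gy] at h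
  exact commutatorElement_eq_one_iff_commute.1 h

lemma commYZ : Commute (Dy r s) (Dz r s) := by
  have h := mk_eq_one (r := r) (s := s)
    (Set.mem_insert_of_mem _ (Set.mem_insert_of_mem _ (Set.mem_insert_of_mem _
      (Set.mem_insert_of_mem _ rfl))))
  rw [map_commutatorElement, map_commutatorElement, mk_gx, mk_gy] at h
  exact commutatorElement_eq_one_iff_commute.1 h

lemma z_comm (g : RedeiGroup r s) : Commute (Dz r s) g := by
  have hg : g ∈ Subgroup.centralizer {Dz r s} := by
    refine PresentedGroup.generated_by _ _ (fun j => ?_) g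
    rw [Subgroup.mem_centralizer_iff]
    intro h hh
    rcases Set.mem_singleton_iff.1 hh with rfl
    fin_cases j
    · exact (commXZ (r := r) (s := s)).symm.eq
    · exact (commYZ (r := r) (s := s)).symm.eq
  exact Subgroup.mem_centralizer_iff.1 hg _ rfl

lemma z_sq : Dz r s * Dz r s = 1 := by
  have := relZ2 (r := r) (s := s); rwa [pow_two] at this

lemma yx : Dy r s * Dx r s = Dx r s * Dy r s * Dz r s := by
  have h1 : Dx r s * Dy r s = Dz r s * (Dy r s * Dx r s) := by
    rw [Dz, commutatorElement_def]; group
  calc Dy r s * Dx r s = Dz r s * Dz r s * (Dy r s * Dx r s) := by rw [z_sq]; group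
    _ = Dz r s * (Dz r s * (Dy r s * Dx r s)) := by group
    _ = Dz r s * (Dx r s * Dy r s) := by rw [← h1]
    _ = Dx r s * Dy r s * Dz r s := (z_comm _).eq.trans (by group)

lemma y_xpow (t : ℕ) : Dy r s * (Dx r s) ^ t = (Dx r s) ^ t * Dy r s * (Dz r s) ^ t := by
  induction t with
  | zero => simp
  | succ t ih =>
    have hzx : (Dz r s) ^ t * Dx r s = Dx r s * (Dz r s) ^ t := ((z_comm _).pow_left t).eq
    calc Dy r s * (Dx r s) ^ (t + 1) = (Dy r s * (Dx r s) ^ t) * Dx r s := by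
          rw [pow_succ]; group
      _ = (Dx r s) ^ t * Dy r s * ((Dz r s) ^ t * Dx r s) := by rw [ih]; group
      _ = (Dx r s) ^ t * (Dy r s * Dx r s) * (Dz r s) ^ t := by rw [hzx]; group
      _ = (Dx r s) ^ t * (Dx r s * Dy r s * Dz r s) * (Dz r s) ^ t := by rw [yx]
      _ = (Dx r s) ^ (t + 1) * Dy r s * (Dz r s) ^ (t + 1) := by rw [pow_succ, pow_succ]; group

lemma ypow_xpow (b t : ℕ) :
    (Dy r s) ^ b * (Dx r s) ^ t = (Dx r s) ^ t * (Dy r s) ^ b * (Dz r s) ^ (b * t) := by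
  induction b with
  | zero => simp
  | succ b ih =>
    have hzy : (Dz r s) ^ (b * t) * Dy r s = Dy r s * (Dz r s) ^ (b * t) :=
      ((z_comm _).pow_left _).eq
    calc (Dy r s) ^ (b + 1) * (Dx r s) ^ t
        = (Dy r s) ^ b * (Dy r s * (Dx r s) ^ t) := by rw [pow_succ]; group
      _ = (Dy r s) ^ b * ((Dx r s) ^ t * Dy r s * (Dz r s) ^ t) := by rw [y_xpow]
      _ = ((Dy r s) ^ b * (Dx r s) ^ t) * Dy r s * (Dz r s) ^ t := by group
      _ = (Dx r s) ^ t * (Dy r s) ^ b * ((Dz r s) ^ (b * t) * Dy r s) * (Dz r s) ^ t := by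
          rw [ih]; group
      _ = (Dx r s) ^ t * (Dy r s) ^ (b + 1) * ((Dz r s) ^ (b * t) * (Dz r s) ^ t) := by
          rw [hzy, pow_succ]; group
      _ = (Dx r s) ^ t * (Dy r s) ^ (b + 1) * (Dz r s) ^ ((b + 1) * t) := by
          rw [← pow_add]; ring_nf

lemma formMul (A B C A' B' C' : ℕ) :
    (Dx r s ^ A * Dy r s ^ B * Dz r s ^ C) * (Dx r s ^ A' * Dy r s ^ B' * Dz r s ^ C') =
      Dx r s ^ (A + A') * Dy r s ^ (B + B') * Dz r s ^ (C + C' + B * A') := by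
  have h1 : (Dz r s) ^ C * (Dx r s ^ A' * Dy r s ^ B' * Dz r s ^ C') =
      (Dx r s ^ A' * Dy r s ^ B' * Dz r s ^ C') * (Dz r s) ^ C := ((z_comm _).pow_left C).eq
  have h2 : (Dz r s) ^ (B * A') * Dy r s ^ B' = Dy r s ^ B' * (Dz r s) ^ (B * A') :=
    ((z_comm _).pow_left _).eq
  calc (Dx r s ^ A * Dy r s ^ B * Dz r s ^ C) * (Dx r s ^ A' * Dy r s ^ B' * Dz r s ^ C')
      = Dx r s ^ A * Dy r s ^ B * ((Dz r s) ^ C * (Dx r s ^ A' * Dy r s ^ B' * Dz r s ^ C')) := by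
        group
    _ = Dx r s ^ A * ((Dy r s ^ B * Dx r s ^ A') * Dy r s ^ B' * (Dz r s ^ C' * Dz r s ^ C)) := by
        rw [h1]; group
    _ = Dx r s ^ A * ((Dx r s ^ A' * Dy r s ^ B * Dz r s ^ (B * A')) * Dy r s ^ B' *
          (Dz r s ^ C' * Dz r s ^ C)) := by rw [ypow_xpow]
    _ = (Dx r s ^ A * Dx r s ^ A') * (Dy r s ^ B * (Dz r s ^ (B * A') * Dy r s ^ B')) *
          (Dz r s ^ C' * Dz r s ^ C) := by group
    _ = (Dx r s ^ A * Dx r s ^ A') * (Dy r s ^ B * Dy r s ^ B') *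
          (Dz r s ^ (B * A') * Dz r s ^ C' * Dz r s ^ C) := by rw [h2]; group
    _ = Dx r s ^ (A + A') * Dy r s ^ (B + B') * Dz r s ^ (C + C' + B * A') := by
        rw [← pow_add, ← pow_add, ← pow_add, ← pow_add, show B * A' + C' + C = C + C' + B * A' by ring]

lemma xpow_mod {A B : ℕ} (h : A % 2 ^ r = B % 2 ^ r) : (Dx r s) ^ A = (Dx r s) ^ B := by
  rw [pow_eq_pow_mod A relX, pow_eq_pow_mod B relX, h]

lemma ypow_mod {A B : ℕ} (h : A % 2 ^ s = B % 2 ^ s) : (Dy r s) ^ A = (Dy r s) ^ B := by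
  rw [pow_eq_pow_mod A relY, pow_eq_pow_mod B relY, h]

lemma zpow_mod {A B : ℕ} (h : A % 2 = B % 2) : (Dz r s) ^ A = (Dz r s) ^ B := by
  rw [pow_eq_pow_mod A relZ2, pow_eq_pow_mod B relZ2, h]

@[ext]
structure Md (n : ℕ) where
  i : ZMod n
  j : ZMod 2
  e : ZMod 2

namespace Md
variable {n : ℕ}

/-- The mod-2 reduction cocycle. -/
def M (u : ZMod n) : ZMod 2 := (u.val : ZMod 2)

variable [NeZero n] [Fact (2 ∣ n)]

lemma M_natCast (t : ℕ) : M ((t : ZMod n)) = (t : ZMod 2) := by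
  have h2 : ((n : ℕ) : ZMod 2) = 0 :=
    (ZMod.natCast_eq_zero_iff n 2).2 (Fact.out)
  rw [M, ZMod.val_natCast]
  conv_rhs => rw [← Nat.div_add_mod t n]
  push_cast
  rw [h2]
  ring

lemma M_add (u v : ZMod n) : M (u + v) = M u + M v := by
  have hu : ((u.val : ℕ) : ZMod n) = u := ZMod.natCast_rightInverse u
  have hv : ((v.val : ℕ) : ZMod n) = v := ZMod.natCast_rightInverse v
  have h : u + v = ((u.val + v.val : ℕ) : ZMod n) := by rw [Nat.cast_add, hu, hv]
  rw [h, M_natCast, Nat.cast_add]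
  rfl

@[simp] lemma M_zero : M (0 : ZMod n) = 0 := by
  simpa using M_natCast (n := n) 0

lemma M_one [Fact (1 < n)] : M (1 : ZMod n) = 1 := by
  rw [M, ZMod.val_one]; norm_num

lemma M_neg (u : ZMod n) : M (-u) = M u := by
  have := M_add (-u) u
  simp only [neg_add_cancel, M_zero] at this
  have h2 : ∀ w : ZMod 2, w + w = 0 := by decide
  calc M (-u) = M (-u) + (M u + M u) := by rw [h2]; ring
    _ = (M (-u) + M u) + M u := by ring
    _ = M u := by rw [← this]; ring

instance : One (Md n) := ⟨⟨0, 0, 0⟩⟩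
instance : Mul (Md n) := ⟨fun p q => ⟨p.i + q.i, p.j + q.j, p.e + q.e + p.j * M q.i⟩⟩
instance : Inv (Md n) := ⟨fun p => ⟨-p.i, -p.j, -p.e + p.j * M p.i⟩⟩

@[simp] lemma one_i : (1 : Md n).i = 0 := rfl
@[simp] lemma one_j : (1 : Md n).j = 0 := rfl
@[simp] lemma one_e : (1 : Md n).e = 0 := rfl
@[simp] lemma mul_i (p q : Md n) : (p * q).i = p.i + q.i := rfl
@[simp] lemma mul_j (p q : Md n) : (p * q).j = p.j + q.j := rfl
@[simp] lemma mul_e (p q : Md n) : (p * q).e = p.e + q.e + p.j * M q.i := rfl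
@[simp] lemma inv_i (p : Md n) : (p⁻¹).i = -p.i := rfl
@[simp] lemma inv_j (p : Md n) : (p⁻¹).j = -p.j := rfl
@[simp] lemma inv_e (p : Md n) : (p⁻¹).e = -p.e + p.j * M p.i := rfl

instance : Group (Md n) where
  mul_assoc p q w := by
    ext <;> simp [M_add] <;> ring
  one_mul p := by ext <;> simp
  mul_one p := by ext <;> simp
  inv_mul_cancel p := by
    ext <;> simp [M_neg] <;> ring <;> reduce_mod_char

def X : Md n := ⟨1, 0, 0⟩
def Y : Md n := ⟨0, 1, 0⟩
def Z : Md n := ⟨0, 0, 1⟩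

lemma pow_def (u : ZMod n) (w : ZMod 2) (t : ℕ) :
    (⟨u, 0, w⟩ : Md n) ^ t = ⟨(t : ZMod n) * u, 0, (t : ZMod 2) * w⟩ := by
  induction t with
  | zero => ext <;> simp
  | succ t ih =>
    rw [pow_succ, ih]
    ext <;> push_cast <;> simp <;> ring

lemma zpow_def (u : ZMod n) (w : ZMod 2) (t : ℤ) :
    (⟨u, 0, w⟩ : Md n) ^ t = ⟨(t : ZMod n) * u, 0, (t : ZMod 2) * w⟩ := by
  cases t with
  | ofNat t => rw [Int.ofNat_eq_coe, zpow_natCast, pow_def]; push_cast; ring_nf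
  | negSucc t =>
    rw [zpow_negSucc, pow_def]
    ext <;> simp [M_neg] <;> push_cast <;> ring <;> simp

lemma Ypow (t : ℕ) : (Y : Md n) ^ t = ⟨0, (t : ZMod 2), 0⟩ := by
  induction t with
  | zero => ext <;> simp
  | succ t ih => rw [pow_succ, ih]; ext <;> push_cast <;> simp [Y]

end Md
section Iso
open Md

variable (r : ℕ) [NeZero (2 ^ r)] [Fact (2 ∣ 2 ^ r)] [Fact (1 < 2 ^ r)]

lemma Zc (p : Md (2 ^ r)) : (Z : Md (2 ^ r)) * p = p * Z := by
  ext <;> simp [Z] <;> ring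

lemma Z2 : (Z : Md (2 ^ r)) ^ 2 = 1 := by
  rw [Z, pow_def]; ext <;> simp <;> decide

lemma commXY : ⁅(X : Md (2 ^ r)), (Y : Md (2 ^ r))⁆ = Z := by
  rw [commutatorElement_def]
  ext <;> simp [X, Y, Z, M_neg, M_one] <;> ring <;> reduce_mod_char

def fgen : Fin 2 → Md (2 ^ r) := ![X, Y]

lemma hrels : ∀ w ∈ redeiRels r 1, FreeGroup.lift (fgen r) w = 1 := by
  intro w hw
  have hx : FreeGroup.lift (fgen r) gx = X := by simp [gx, fgen]
  have hy : FreeGroup.lift (fgen r) gy = Y := by simp [gy, fgen]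
  simp only [redeiRels, Set.mem_insert_iff, Set.mem_singleton_iff] at hw
  rcases hw with rfl | rfl | rfl | rfl | rfl
  · rw [map_pow, hx, X, pow_def]
    ext <;> simp
  · rw [map_pow, hy, pow_one, Ypow]
    ext <;> simp <;> decide
  · rw [map_pow, map_commutatorElement, hx, hy, commXY, Z2]
  · rw [map_commutatorElement, map_commutatorElement, hx, hy, commXY]
    exact commutatorElement_eq_one_iff_commute.2 ((Zc r X).symm)
  · rw [map_commutatorElement, map_commutatorElement, hx, hy, commXY]
    exact commutatorElement_eq_one_iff_commute.2 ((Zc r Y).symm)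

def phi : RedeiGroup r 1 →* Md (2 ^ r) := PresentedGroup.toGroup (hrels r)

lemma phi_x : phi r (Dx r 1) = X := by
  show PresentedGroup.toGroup (hrels r) (PresentedGroup.of 0) = X
  rw [PresentedGroup.toGroup.of]
  simp [fgen]

lemma phi_y : phi r (Dy r 1) = Y := by
  show PresentedGroup.toGroup (hrels r) (PresentedGroup.of 1) = Y
  rw [PresentedGroup.toGroup.of]
  simp [fgen]

lemma phi_z : phi r (Dz r 1) = Z := by
  rw [Dz, map_commutatorElement, phi_x, phi_y, commXY]

private lemma natm (a b c d : ℕ) :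
    (((a + b) % 2 + (c * (d % 2)) % 2) % 2) % 2 = (a + b + c * d) % 2 := by
  have h1 : c * (d % 2) % 2 = c * d % 2 := by
    conv_rhs => rw [Nat.mul_mod]
    rw [Nat.mul_mod, Nat.mod_mod_of_dvd d dvd_rfl]
  rw [h1]
  omega

def psi : Md (2 ^ r) →* RedeiGroup r 1 where
  toFun p := Dx r 1 ^ p.i.val * Dy r 1 ^ p.j.val * Dz r 1 ^ p.e.val
  map_one' := by simp
  map_mul' p q := by
    simp only [mul_i, mul_j, mul_e]
    rw [formMul]
    have e1 : (Dx r 1) ^ ((p.i + q.i).val) = (Dx r 1) ^ (p.i.val + q.i.val) :=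
      xpow_mod (by rw [ZMod.val_add, Nat.mod_mod_of_dvd _ dvd_rfl])
    have e2 : (Dy r 1) ^ ((p.j + q.j).val) = (Dy r 1) ^ (p.j.val + q.j.val) :=
      ypow_mod (by rw [pow_one, ZMod.val_add, Nat.mod_mod_of_dvd _ dvd_rfl])
    have e3 : (Dz r 1) ^ ((p.e + q.e + p.j * M q.i).val) =
        (Dz r 1) ^ (p.e.val + q.e.val + p.j.val * q.i.val) := by
      refine zpow_mod ?_
      rw [ZMod.val_add, ZMod.val_add, ZMod.val_mul, M, ZMod.val_natCast]
      exact natm _ _ _ _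
    rw [e1, e2, e3]

lemma psi_phi : (psi r).comp (phi r) = MonoidHom.id _ := by
  ext i
  fin_cases i
  · show psi r (phi r (Dx r 1)) = Dx r 1
    rw [phi_x]
    show Dx r 1 ^ (1 : ZMod (2 ^ r)).val * Dy r 1 ^ (0 : ZMod 2).val *
      Dz r 1 ^ (0 : ZMod 2).val = Dx r 1
    rw [ZMod.val_one, ZMod.val_zero]
    simp
  · show psi r (phi r (Dy r 1)) = Dy r 1
    rw [phi_y]
    show Dx r 1 ^ (0 : ZMod (2 ^ r)).val * Dy r 1 ^ (1 : ZMod 2).val *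
      Dz r 1 ^ (0 : ZMod 2).val = Dy r 1
    rw [ZMod.val_one, ZMod.val_zero]
    simp

lemma phi_psi : (phi r).comp (psi r) = MonoidHom.id _ := by
  refine MonoidHom.ext fun p => ?_
  show phi r (Dx r 1 ^ p.i.val * Dy r 1 ^ p.j.val * Dz r 1 ^ p.e.val) = p
  rw [map_mul, map_mul, map_pow, map_pow, map_pow, phi_x, phi_y, phi_z]
  rw [X, pow_def, Ypow, Z, pow_def]
  ext
  · simp [ZMod.natCast_rightInverse p.i]
  · simp [ZMod.natCast_rightInverse p.j]
  · simp [ZMod.natCast_rightInverse p.e]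

def Phi : RedeiGroup r 1 ≃* Md (2 ^ r) :=
  MonoidHom.toMulEquiv (phi r) (psi r) (psi_phi r) (phi_psi r)

lemma Phi_x : Phi r (Dx r 1) = X := phi_x r
lemma Phi_z : Phi r (Dz r 1) = Z := phi_z r

end Iso

section Part1
open Md

lemma gen_eq (r k : ℕ) (hr : 2 ≤ r) (hk : k < r - 1)
    (c : RedeiGroup r 1) (hc : c ∈ Subgroup.center (RedeiGroup r 1))
    (hco : orderOf c = 2 ^ (r - 1))
    (a : RedeiGroup r 1) (ha : a ∈ Subgroup.zpowers c) (hao : orderOf a = 2 ^ k) :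
    Subgroup.zpowers a = Subgroup.zpowers ((Dx r 1) ^ (2 ^ (r - k))) := by
  haveI : NeZero (2 ^ r) := ⟨by positivity⟩
  haveI : Fact (2 ∣ 2 ^ r) := ⟨dvd_pow_self 2 (by omega)⟩
  haveI : Fact (1 < 2 ^ r) := ⟨by
    have : 2 ^ 1 ≤ 2 ^ r := Nat.pow_le_pow_right (by norm_num) (by omega)
    omega⟩
  rcases Nat.eq_zero_or_pos k with rfl | hk1
  · have ha1 : a = 1 := orderOf_eq_one_iff.1 (by rw [hao, pow_zero])
    rw [ha1, Nat.sub_zero, relX]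
  -- now 1 ≤ k, k < r - 1, so r ≥ 3
  have hr3 : 3 ≤ r := by omega
  set n := 2 ^ r with hn
  obtain ⟨m, rfl⟩ := Subgroup.mem_zpowers_iff.1 ha
  -- center information
  have hPc : ∀ g : Md n, Phi r c * g = g * Phi r c := by
    intro g
    have h := (Subgroup.mem_center_iff.1 hc) ((Phi r).symm g)
    calc Phi r c * g = Phi r (c * (Phi r).symm g) := by
          rw [map_mul, MulEquiv.apply_symm_apply]
      _ = Phi r ((Phi r).symm g * c) := by rw [← h]
      _ = g * Phi r c := by rw [map_mul, MulEquiv.apply_symm_apply]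
  have hj : (Phi r c).j = 0 := by
    have h1 := hPc X
    have h2 := congrArg Md.e h1
    simp only [mul_e, X, M_one, mul_one, M_zero, mul_zero] at h2
    -- h2 : (Phi r c).e + 0 + (Phi r c).j = 0 + (Phi r c).e + 0  (roughly)
    linear_combination h2
  set i := (Phi r c).i with hi
  set ee := (Phi r c).e with hee
  have hP : Phi r c = (⟨i, 0, ee⟩ : Md n) := by
    ext
    · rfl
    · exact hj
    · rfl
  have hoc : orderOf (Phi r c) = 2 ^ (r - 1) := by
    rw [MulEquiv.orderOf_eq, hco]
  have hpow1 : (2 : ZMod n) ^ (r - 1) * i = 0 := by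
    have h1 : (Phi r c) ^ (2 ^ (r - 1)) = 1 := by
      rw [← hoc]; exact pow_orderOf_eq_one _
    rw [hP, pow_def] at h1
    have h2 := congrArg Md.i h1
    simp only [one_i] at h2
    push_cast at h2
    exact h2
  have hc2 : (2 : ZMod n) ^ (r - 2) * i ≠ 0 := by
    intro h0
    have h1 : (Phi r c) ^ (2 ^ (r - 2)) = 1 := by
      rw [hP, pow_def]
      ext
      · push_cast
        exact h0
      · rfl
      · show ((2 ^ (r - 2) : ℕ) : ZMod 2) * ee = 0
        have : ((2 ^ (r - 2) : ℕ) : ZMod 2) = 0 :=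
          (ZMod.natCast_eq_zero_iff _ 2).2 (dvd_pow_self 2 (by omega))
        rw [this, zero_mul]
    have h2 : orderOf (Phi r c) ∣ 2 ^ (r - 2) := orderOf_dvd_of_pow_eq_one h1
    rw [hoc] at h2
    have h3 := Nat.le_of_dvd (by positivity) h2
    have h4 : (2:ℕ) ^ (r - 2) < 2 ^ (r - 1) := Nat.pow_lt_pow_right (by norm_num) (by omega)
    omega
  -- the element a = c ^ m
  have hPa : Phi r (c ^ m) = (⟨(m : ZMod n) * i, 0, (m : ZMod 2) * ee⟩ : Md n) := by
    rw [map_zpow, hP, zpow_def]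
  have hka : (2 : ZMod n) ^ k * ((m : ZMod n) * i) = 0 := by
    have h1 : (Phi r (c ^ m)) ^ (2 ^ k) = 1 := by
      have h0 : (c ^ m) ^ (2 ^ k) = 1 := by rw [← hao]; exact pow_orderOf_eq_one _
      rw [← map_pow, h0, map_one]
    rw [hPa, pow_def] at h1
    have h2 := congrArg Md.i h1
    simp only [one_i] at h2
    push_cast at h2
    exact h2
  rcases Int.even_or_odd m with ⟨l, hl⟩ | ⟨l, hl⟩
  swap
  · -- m odd : contradiction
    exfalso
    have hmu : (m : ZMod n) = 2 * (l : ZMod n) + 1 := by rw [hl]; push_cast; ring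
    have e1 : (2 : ZMod n) ^ (r - 1) = 2 * (2 : ZMod n) ^ (r - 2) := by
      rw [show r - 1 = (r - 2) + 1 by omega, pow_succ]; ring
    have e2 : (m : ZMod n) * ((2 : ZMod n) ^ (r - 2) * i) =
        (2 : ZMod n) ^ (r - 2 - k) * ((2 : ZMod n) ^ k * ((m : ZMod n) * i)) := by
      rw [show (2 : ZMod n) ^ (r - 2) = (2 : ZMod n) ^ (r - 2 - k) * (2 : ZMod n) ^ k by
        rw [← pow_add]; congr 1; omega]
      ring
    refine hc2 ?_
    calc (2 : ZMod n) ^ (r - 2) * i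
        = (m : ZMod n) * ((2 : ZMod n) ^ (r - 2) * i) -
            (l : ZMod n) * ((2 : ZMod n) ^ (r - 1) * i) := by rw [hmu, e1]; ring
      _ = (2 : ZMod n) ^ (r - 2 - k) * ((2 : ZMod n) ^ k * ((m : ZMod n) * i)) -
            (l : ZMod n) * ((2 : ZMod n) ^ (r - 1) * i) := by rw [e2]
      _ = 0 := by rw [hka, hpow1]; ring
  -- m even
  have hme : ((m : ℤ) : ZMod 2) = 0 := by
    rw [hl]
    push_cast
    rw [show ((l : ZMod 2)) + (l : ZMod 2) = 2 * l by ring,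
      show (2 : ZMod 2) = 0 by decide, zero_mul]
  set ia : ZMod n := (m : ZMod n) * i with hia
  have hPa' : Phi r (c ^ m) = (⟨ia, 0, 0⟩ : Md n) := by
    rw [hPa, hme, zero_mul]
  have hA : (2 : ZMod n) ^ k * ia = 0 := hka
  have hB : (2 : ZMod n) ^ (k - 1) * ia ≠ 0 := by
    intro h0
    have h1 : (Phi r (c ^ m)) ^ (2 ^ (k - 1)) = 1 := by
      rw [hPa', pow_def]
      ext
      · push_cast; exact h0
      · rfl
      · show ((2 ^ (k - 1) : ℕ) : ZMod 2) * 0 = 0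
        rw [mul_zero]
    have h2 : orderOf (Phi r (c ^ m)) ∣ 2 ^ (k - 1) := orderOf_dvd_of_pow_eq_one h1
    rw [MulEquiv.orderOf_eq, hao] at h2
    have h3 := Nat.le_of_dvd (by positivity) h2
    have h4 : (2:ℕ) ^ (k - 1) < 2 ^ k := Nat.pow_lt_pow_right (by norm_num) (by omega)
    omega
  -- translate to ℕ divisibility
  have hvala : ((ia.val : ℕ) : ZMod n) = ia := ZMod.natCast_rightInverse ia
  have hdvd : 2 ^ r ∣ 2 ^ k * ia.val := by
    refine (ZMod.natCast_eq_zero_iff _ n).1 ?_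
    push_cast
    rw [hvala]
    exact hA
  have hdvd2 : 2 ^ (r - k) ∣ ia.val := by
    have h1 : 2 ^ (r - k) * 2 ^ k ∣ ia.val * 2 ^ k := by
      rw [← pow_add, show r - k + k = r by omega, Nat.mul_comm]
      exact hdvd
    exact (Nat.mul_dvd_mul_iff_right (by positivity : 0 < 2 ^ k)).1 h1
  obtain ⟨t, ht⟩ := hdvd2
  have htodd : ¬ 2 ∣ t := by
    intro ⟨t', ht'⟩
    refine hB ?_
    have hval2 : (2:ℕ) ^ (k - 1) * ia.val = 2 ^ r * t' := by
      rw [ht, ht']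
      rw [show (2:ℕ) ^ (k-1) * (2 ^ (r - k) * (2 * t')) = (2 ^ (k-1) * 2 ^ (r-k) * 2) * t' by ring,
        show (2:ℕ) ^ (k-1) * 2 ^ (r-k) * 2 = 2 ^ ((k-1) + (r-k) + 1) by rw [pow_add, pow_add, pow_one],
        show (k-1) + (r-k) + 1 = r by omega]
    calc (2 : ZMod n) ^ (k - 1) * ia = ((2 ^ (k - 1) * ia.val : ℕ) : ZMod n) := by
          push_cast [hvala]; ring
      _ = ((2 ^ r * t' : ℕ) : ZMod n) := by rw [hval2]
      _ = 0 := by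
          refine (ZMod.natCast_eq_zero_iff _ n).2 ?_
          exact Dvd.intro t' rfl
  have hcop : Nat.Coprime t (2 ^ r) :=
    Nat.Coprime.pow_right r (Nat.coprime_comm.1 ((Nat.Prime.coprime_iff_not_dvd Nat.prime_two).2 htodd))
  have hunit : IsUnit ((t : ℕ) : ZMod n) := (ZMod.isUnit_iff_coprime t (2 ^ r)).2 hcop
  obtain ⟨u, hu⟩ := hunit
  set w : ZMod n := ((2 ^ (r - k) : ℕ) : ZMod n) with hw
  have hiaw : ia = w * (u : ZMod n) := by
    rw [hu, ← hvala, ht, hw]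
    push_cast
    ring
  have hPhix : Phi r ((Dx r 1) ^ (2 ^ (r - k))) = (⟨w, 0, 0⟩ : Md n) := by
    rw [map_pow, Phi_x, X, pow_def]
    ext
    · show ((2 ^ (r - k) : ℕ) : ZMod n) * 1 = w
      rw [mul_one, hw]
    · rfl
    · show ((2 ^ (r - k) : ℕ) : ZMod 2) * 0 = 0
      rw [mul_zero]
  -- two inclusions
  apply le_antisymm <;> rw [Subgroup.zpowers_le] <;> rw [Subgroup.mem_zpowers_iff]
  · -- c ^ m ∈ zpowers (x ^ 2^(r-k))
    refine ⟨(t : ℤ), (Phi r).injective ?_⟩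
    rw [map_zpow, hPhix, zpow_def, hPa']
    ext
    · show ((t : ℤ) : ZMod n) * w = ia
      rw [hiaw, hu]
      push_cast
      ring
    · rfl
    · show ((t : ℤ) : ZMod 2) * 0 = 0
      rw [mul_zero]
  · -- x ^ 2^(r-k) ∈ zpowers (c ^ m)
    obtain ⟨sz, hsz⟩ := ZMod.intCast_surjective ((u⁻¹ : (ZMod n)ˣ) : ZMod n)
    refine ⟨sz, (Phi r).injective ?_⟩
    rw [map_zpow, hPa', zpow_def, hPhix]
    ext
    · show ((sz : ℤ) : ZMod n) * ia = w
      rw [hsz, hiaw]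
      calc ((u⁻¹ : (ZMod n)ˣ) : ZMod n) * (w * (u : ZMod n))
          = w * (((u⁻¹ : (ZMod n)ˣ) : ZMod n) * (u : ZMod n)) := by ring
        _ = w := by rw [Units.inv_mul, mul_one]
    · rfl
    · show ((sz : ℤ) : ZMod 2) * 0 = 0
      rw [mul_zero]

end Part1

section Part2

lemma quot_iso (r k : ℕ) (hkr : k ≤ r) (N : Subgroup (RedeiGroup r 1)) [N.Normal]
    (hN : N = Subgroup.zpowers ((Dx r 1) ^ (2 ^ (r - k)))) :
    Nonempty ((RedeiGroup r 1 ⧸ N) ≃* RedeiGroup (r - k) 1) := by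
  set r' := r - k with hr'
  have hrels1 : ∀ w ∈ redeiRels r 1, FreeGroup.lift (![Dx r' 1, Dy r' 1]) w = 1 := by
    intro w hw
    have hx : FreeGroup.lift (![Dx r' 1, Dy r' 1]) gx = Dx r' 1 := by simp [gx]
    have hy : FreeGroup.lift (![Dx r' 1, Dy r' 1]) gy = Dy r' 1 := by simp [gy]
    simp only [redeiRels, Set.mem_insert_iff, Set.mem_singleton_iff] at hw
    rcases hw with rfl | rfl | rfl | rfl | rfl
    · rw [map_pow, hx, show (2:ℕ) ^ r = 2 ^ r' * 2 ^ k by rw [← pow_add]; congr 1; omega,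
        pow_mul, relX, one_pow]
    · rw [map_pow, hy, relY]
    · rw [map_pow, map_commutatorElement, hx, hy]
      exact relZ2
    · rw [map_commutatorElement, map_commutatorElement, hx, hy]
      exact commutatorElement_eq_one_iff_commute.2 commXZ
    · rw [map_commutatorElement, map_commutatorElement, hx, hy]
      exact commutatorElement_eq_one_iff_commute.2 commYZ
  let f1 : RedeiGroup r 1 →* RedeiGroup r' 1 := PresentedGroup.toGroup hrels1
  have hf1x : f1 (Dx r 1) = Dx r' 1 := by
    show PresentedGroup.toGroup hrels1 (PresentedGroup.of 0) = Dx r' 1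
    rw [PresentedGroup.toGroup.of]
    simp
  have hf1y : f1 (Dy r 1) = Dy r' 1 := by
    show PresentedGroup.toGroup hrels1 (PresentedGroup.of 1) = Dy r' 1
    rw [PresentedGroup.toGroup.of]
    simp
  have hker : N ≤ f1.ker := by
    rw [hN, Subgroup.zpowers_le, MonoidHom.mem_ker, map_pow, hf1x, relX]
  let fbar : (RedeiGroup r 1 ⧸ N) →* RedeiGroup r' 1 := QuotientGroup.lift N f1 hker
  let ρ : RedeiGroup r 1 →* (RedeiGroup r 1 ⧸ N) := QuotientGroup.mk' N
  have hrels2 : ∀ w ∈ redeiRels r' 1, FreeGroup.lift (![ρ (Dx r 1), ρ (Dy r 1)]) w = 1 := by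
    intro w hw
    have hx : FreeGroup.lift (![ρ (Dx r 1), ρ (Dy r 1)]) gx = ρ (Dx r 1) := by simp [gx]
    have hy : FreeGroup.lift (![ρ (Dx r 1), ρ (Dy r 1)]) gy = ρ (Dy r 1) := by simp [gy]
    simp only [redeiRels, Set.mem_insert_iff, Set.mem_singleton_iff] at hw
    rcases hw with rfl | rfl | rfl | rfl | rfl
    · rw [map_pow, hx, ← map_pow]
      refine (QuotientGroup.eq_one_iff _).2 ?_
      rw [hN]
      exact Subgroup.mem_zpowers _
    · rw [map_pow, hy, ← map_pow, relY, map_one]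
    · rw [map_pow, map_commutatorElement, hx, hy, ← map_commutatorElement, ← map_pow]
      show ρ (Dz r 1 ^ 2) = 1
      rw [relZ2, map_one]
    · rw [map_commutatorElement, map_commutatorElement, hx, hy, ← map_commutatorElement,
        ← map_commutatorElement]
      have h1 : ⁅Dx r 1, ⁅Dx r 1, Dy r 1⁆⁆ = 1 :=
        commutatorElement_eq_one_iff_commute.2 commXZ
      rw [h1, map_one]
    · rw [map_commutatorElement, map_commutatorElement, hx, hy, ← map_commutatorElement,
        ← map_commutatorElement]
      have h1 : ⁅Dy r 1, ⁅Dx r 1, Dy r 1⁆⁆ = 1 :=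
        commutatorElement_eq_one_iff_commute.2 commYZ
      rw [h1, map_one]
  let g1 : RedeiGroup r' 1 →* (RedeiGroup r 1 ⧸ N) := PresentedGroup.toGroup hrels2
  have hg1x : g1 (Dx r' 1) = ρ (Dx r 1) := by
    show PresentedGroup.toGroup hrels2 (PresentedGroup.of 0) = ρ (Dx r 1)
    rw [PresentedGroup.toGroup.of]
    simp
  have hg1y : g1 (Dy r' 1) = ρ (Dy r 1) := by
    show PresentedGroup.toGroup hrels2 (PresentedGroup.of 1) = ρ (Dy r 1)
    rw [PresentedGroup.toGroup.of]
    simp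
  have hfρ : ∀ g : RedeiGroup r 1, fbar (ρ g) = f1 g := fun g => rfl
  have h1 : fbar.comp g1 = MonoidHom.id _ := by
    refine PresentedGroup.ext fun i => ?_
    fin_cases i
    · show fbar (g1 (Dx r' 1)) = Dx r' 1
      rw [hg1x, hfρ, hf1x]
    · show fbar (g1 (Dy r' 1)) = Dy r' 1
      rw [hg1y, hfρ, hf1y]
  have h2 : g1.comp fbar = MonoidHom.id _ := by
    refine QuotientGroup.monoidHom_ext N ?_
    refine PresentedGroup.ext fun i => ?_
    fin_cases i
    · show g1 (fbar (ρ (Dx r 1))) = ρ (Dx r 1)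
      rw [hfρ, hf1x, hg1x]
    · show g1 (fbar (ρ (Dy r 1))) = ρ (Dy r 1)
      rw [hfρ, hf1y, hg1y]
  exact ⟨MonoidHom.toMulEquiv fbar g1 h2 h1⟩

end Part2

end Stmt19

theorem stmt19 (r k : ℕ) (hr : 2 ≤ r) (hk : k < r - 1)
    (c : RedeiGroup r 1) (hc : c ∈ Subgroup.center (RedeiGroup r 1))
    (hco : orderOf c = 2 ^ (r - 1)) (hz : Dz r 1 ∉ Subgroup.zpowers c)
    (a : RedeiGroup r 1) (ha : a ∈ Subgroup.zpowers c) (hao : orderOf a = 2 ^ k)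
    (N : Subgroup (RedeiGroup r 1)) [N.Normal] (hN : N = Subgroup.zpowers a) :
    Nonempty ((RedeiGroup r 1 ⧸ N) ≃* RedeiGroup (r - k) 1) := by
  have hN' : N = Subgroup.zpowers ((Dx r 1) ^ (2 ^ (r - k))) := by
    rw [hN]
    exact Stmt19.gen_eq r k hr hk c hc hco a ha hao
  exact Stmt19.quot_iso r k (by omega) N hN'
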